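/- arXiv:1808.02070 — 2 statements merged into one kernel-verified Lean document; each statement's English description precedes it below -/
import Mathlib

section
/- Let A and B be n×n matrices over an infinite field K with A ≠ B. Then there exists a matrix X such that det(A + X) ≠ det(B + X). -/
theorem stmt10 {K : Type*} [Field K] [Infinite K] {n : ℕ} (hn : 0 < n)
    (A B : Matrix (Fin n) (Fin n) K) (hAB : A ≠ B) :
    ∃ X : Matrix (Fin n) (Fin n) K, (A + X).det ≠ (B + X).det := by
  classical
  set D : Matrix (Fin n) (Fin n) K := B - A with hD
  have hDne : D ≠ 0 := sub_ne_zero.mpr (Ne.symm hAB)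
  -- find a nonzero entry of D
  obtain ⟨i, j, hij⟩ : ∃ i j, D i j ≠ 0 := by
    by_contra h
    push_neg at h
    exact hDne (by ext i j; simpa using h i j)
  set w : Fin n → K := fun k => -(D k j) with hw
  have hwi : w i ≠ 0 := by simpa [hw] using hij
  set σ : Equiv.Perm (Fin n) := Equiv.swap i j with hσ
  set Y : Matrix (Fin n) (Fin n) K :=
    ((1 : Matrix (Fin n) (Fin n) K).updateCol j (w ∘ σ)).submatrix σ id with hY
  -- the j-th column of Y is w
  have hcol : ∀ k, Y k j = w k := by
    intro k
    simp [hY, hσ, Matrix.submatrix_apply, Matrix.updateCol_apply, Equiv.swap_apply_self]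
  -- det Y ≠ 0
  have hdetY : Y.det ≠ 0 := by
    have h1 : Y.det = Equiv.Perm.sign σ *
        ((1 : Matrix (Fin n) (Fin n) K).updateCol j (w ∘ σ)).det := by
      simpa [hY] using
        Matrix.det_permute σ ((1 : Matrix (Fin n) (Fin n) K).updateCol j (w ∘ σ))
    have h2 : ((1 : Matrix (Fin n) (Fin n) K).updateCol j (w ∘ σ)).det = w (σ j) := by
      rw [← Matrix.cramer_apply, Matrix.cramer_one]
      rfl
    have h3 : w (σ j) = w i := by simp [hσ, Equiv.swap_apply_right]
    rw [h1, h2, h3]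
    simp only [ne_eq, mul_eq_zero, not_or]
    refine ⟨?_, hwi⟩
    rcases Int.units_eq_one_or (Equiv.Perm.sign σ) with h | h <;> simp [h]
  -- det (Y + D) = 0: its j-th column is zero
  have hdetYD : (Y + D).det = 0 := by
    apply Matrix.det_eq_zero_of_column_eq_zero j
    intro k
    simp [Matrix.add_apply, hcol k, hw]
  refine ⟨Y - A, ?_⟩
  have hA : A + (Y - A) = Y := by abel
  have hB : B + (Y - A) = Y + D := by rw [hD]; abel
  rw [hA, hB, hdetYD]
  exact hdetY
end

section
/- Let A and B be n×n matrices over an infinite field K. If det(A + X) = det(B + X) for every matrix X, then A = B. -/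
open Matrix

/-- If `det (C + N) = det N` for every `N`, then the off-diagonal entries of `C` vanish. -/
lemma aux_offdiag {K : Type*} [Field K] {n : ℕ}
    (C : Matrix (Fin n) (Fin n) K)
    (hC : ∀ N : Matrix (Fin n) (Fin n) K, (C + N).det = N.det)
    {i j : Fin n} (hij : i ≠ j) : C i j = 0 := by
  set u : Fin n → K := Pi.single j 1 with hu
  set v : Fin n → K := Pi.single i 1 with hv
  set E : Matrix (Fin n) (Fin n) K := replicateCol Unit u * replicateRow Unit v with hE
  have hvu : v ⬝ᵥ u = 0 := by
    simp [hu, hv, dotProduct, Pi.single_apply, hij, hij.symm]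
  have hEE : E * E = 0 := by
    have : replicateRow Unit v * replicateCol Unit u = 0 := by
      ext a b
      simpa [Matrix.mul_apply, dotProduct] using hvu
    calc E * E = replicateCol Unit u * (replicateRow Unit v * replicateCol Unit u) * replicateRow Unit v := by
          simp [hE, Matrix.mul_assoc]
      _ = 0 := by rw [this]; simp
  have hdet1E : (1 + E).det = 1 := by
    rw [hE, det_one_add_replicateCol_mul_replicateRow, hvu]; ring
  have hdetmE : (1 - E).det = 1 := by
    have : (1 : Matrix (Fin n) (Fin n) K) - E = 1 + replicateCol Unit (-u) * replicateRow Unit v := by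
      rw [hE, sub_eq_add_neg, ← Matrix.neg_mul]
      congr 1
    rw [this, det_one_add_replicateCol_mul_replicateRow]
    simp [hvu]
  -- det (C + 1 + E) = 1
  have h1 : (C + (1 + E)).det = 1 := by rw [hC, hdet1E]
  -- (1 - E) * (C + (1 + E)) = C + (1 - E * C)
  have h2 : (1 - E) * (C + (1 + E)) = C + (1 - E * C) := by
    have : (1 - E) * (C + (1 + E)) = C + 1 + E - E * C - E - E * E := by
      noncomm_ring
    rw [this, hEE]
    noncomm_ring
  have h3 : (C + (1 - E * C)).det = 1 := by
    rw [← h2, det_mul, hdetmE, h1, one_mul]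
  have h4 : (1 - E * C).det = 1 := by rw [← hC, h3]
  -- compute det (1 - E * C) = 1 - C i j
  have h5 : (1 : Matrix (Fin n) (Fin n) K) - E * C = 1 + replicateCol Unit (-u) * replicateRow Unit (C i) := by
    have hrow : replicateRow Unit v * C = replicateRow Unit (C i) := by
      ext a b
      simp [Matrix.mul_apply, hv, Pi.single_apply]
    rw [hE, Matrix.mul_assoc, hrow, sub_eq_add_neg, ← Matrix.neg_mul]
    congr 2
  have h6 : (1 - E * C).det = 1 - C i j := by
    rw [h5, det_one_add_replicateCol_mul_replicateRow]
    simp [hu, dotProduct, Pi.single_apply, sub_eq_add_neg]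
  rw [h6] at h4
  exact sub_eq_self.mp h4

theorem stmt11 {K : Type*} [Field K] [Infinite K] {n : ℕ}
    (A B : Matrix (Fin n) (Fin n) K)
    (h : ∀ X : Matrix (Fin n) (Fin n) K, (A + X).det = (B + X).det) :
    A = B := by
  classical
  have hC : ∀ N : Matrix (Fin n) (Fin n) K, (A - B + N).det = N.det := by
    intro N
    have e1 : A - B + N = A + (N - B) := by abel
    have e2 : N = B + (N - B) := by abel
    rw [e1, h (N - B), ← e2]
  set C := A - B with hCdef
  have hoff : ∀ {i j : Fin n}, i ≠ j → C i j = 0 := fun hij => aux_offdiag C hC hij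
  suffices hC0 : C = 0 by
    have := sub_eq_zero.mp hC0
    exact this
  ext i j
  rcases eq_or_ne i j with rfl | hij
  · -- diagonal entry
    obtain ⟨t, ht⟩ := Infinite.exists_notMem_finset
      (Finset.image (fun k => -C k k) Finset.univ)
    have htne : ∀ k : Fin n, C k k + t ≠ 0 := by
      intro k hk
      exact ht (Finset.mem_image.mpr ⟨k, Finset.mem_univ k, by linear_combination -hk⟩)
    set g : Fin n → K := fun k => if k = i then 0 else t with hg
    have hCN : C + diagonal g = diagonal (fun k => C k k + g k) := by
      ext a b
      rcases eq_or_ne a b with rfl | hab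
      · simp
      · simp [diagonal_apply_ne _ hab, hoff hab]
    have hdg : (diagonal g).det = 0 := by
      rw [det_diagonal]
      exact Finset.prod_eq_zero (Finset.mem_univ i) (by simp [hg])
    have := hC (diagonal g)
    rw [hCN, hdg, det_diagonal] at this
    obtain ⟨k, -, hk⟩ := Finset.prod_eq_zero_iff.mp this
    rcases eq_or_ne k i with rfl | hki
    · simpa [hg] using hk
    · exact absurd (by simpa [hg, hki] using hk) (htne k)
  · simpa using hoff hij
end
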